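/- Let V be a finite-dimensional complex vector space and let V = E ⊕ F be a direct sum decomposition into subspaces E and F. Let H and H' be Hermitian sesquilinear forms on V such that H is positive definite on E (i.e. H(e,e) > 0 for every nonzero e ∈ E), H' is positive definite on F (i.e. H'(f,f) > 0 for every nonzero f ∈ F), and E is contained in the kernel of H' (i.e. H'(e,v) = 0 for all e ∈ E and v ∈ V). Then there exists a real constant c > 0 such that the Hermitian form H + cH' is positive definite on all of V, i.e. (H + cH')(v,v) > 0 for every nonzero v ∈ V. -/

import Mathlib

/-- Let `V` be a finite-dimensional complex vector space with a direct
sum decomposition `V = E ⊕ F`. Let `H, H'` be Hermitian sesquilinear forms on `V`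
(ℂ-linear in the first argument, conjugate-linear in the second) such that `H` is
positive definite on `E`, `H'` is positive definite on `F`, and `E ⊆ ker H'`.
Then there is a constant `c > 0` such that `H + c H'` is positive definite on `V`. -/
theorem stmt_0 (V : Type*) [AddCommGroup V] [Module ℂ V] [FiniteDimensional ℂ V]
    (E F : Submodule ℂ V) (hEF : IsCompl E F)
    (H H' : V →ₗ[ℂ] V →ₛₗ[starRingEnd ℂ] ℂ)
    (hHherm : ∀ u v : V, (starRingEnd ℂ) (H u v) = H v u)
    (hH'herm : ∀ u v : V, (starRingEnd ℂ) (H' u v) = H' v u)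
    (hHE : ∀ e ∈ E, e ≠ 0 → 0 < (H e e).re)
    (hH'F : ∀ f ∈ F, f ≠ 0 → 0 < (H' f f).re)
    (hker : ∀ e ∈ E, ∀ v : V, H' e v = 0) :
    ∃ c : ℝ, 0 < c ∧ ∀ v : V, v ≠ 0 → 0 < (H v v + (c : ℂ) * H' v v).re := by
  classical
  -- decomposition facts
  have hsplit : ∀ v : V, ∃ f ∈ F, H' v v = H' f f ∧ (v ∉ E → f ≠ 0) := by
    intro v
    have hv : v ∈ E ⊔ F := by rw [hEF.sup_eq_top]; exact Submodule.mem_top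
    obtain ⟨e, he, f, hf, hef⟩ := Submodule.mem_sup.mp hv
    refine ⟨f, hf, ?_, ?_⟩
    · have h1 : H' f e = 0 := by rw [← hH'herm e f, hker e he f, map_zero]
      have hadd : H' (e + f) = H' e + H' f := map_add H' e f
      calc H' v v = H' e v + H' f v := by rw [← hef, hadd, LinearMap.add_apply]
        _ = H' f e + H' f f := by rw [hker e he, ← hef, map_add, zero_add]
        _ = H' f f := by rw [h1, zero_add]
    · intro hvE hf0
      exact hvE (by rw [← hef, hf0, add_zero]; exact he)
  have hnn : ∀ v : V, 0 ≤ (H' v v).re := by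
    intro v
    obtain ⟨f, hf, heq, -⟩ := hsplit v
    rw [heq]
    by_cases hf0 : f = 0
    · simp [hf0]
    · exact (hH'F f hf hf0).le
  have hpos' : ∀ v : V, v ≠ 0 → (H v v).re ≤ 0 → 0 < (H' v v).re := by
    intro v hv hle
    obtain ⟨f, hf, heq, hne⟩ := hsplit v
    rw [heq]
    refine hH'F f hf (hne fun hvE => ?_)
    exact absurd hle (not_le.mpr (hHE v hvE hv))
  -- coordinates
  set n := Module.finrank ℂ V with hn
  let b : Module.Basis (Fin n) ℂ V := Module.finBasis ℂ V
  have expand : ∀ (L : V →ₗ[ℂ] V →ₛₗ[starRingEnd ℂ] ℂ) (w : Fin n → ℂ),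
      L (b.equivFun.symm w) (b.equivFun.symm w)
        = ∑ i, ∑ j, w i * (starRingEnd ℂ) (w j) * L (b i) (b j) := by
    intro L w
    rw [b.equivFun_symm_apply]
    simp only [map_sum, LinearMap.sum_apply, map_smulₛₗ, LinearMap.map_smul,
      LinearMap.smul_apply, smul_eq_mul, Finset.mul_sum]
    rw [Finset.sum_comm]
    exact Finset.sum_congr rfl fun i _ => Finset.sum_congr rfl fun j _ => by
      simp only [RingHom.id_apply]; ring
  set G : (Fin n → ℂ) → ℝ := fun w => (H (b.equivFun.symm w) (b.equivFun.symm w)).re with hG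
  set G' : (Fin n → ℂ) → ℝ := fun w => (H' (b.equivFun.symm w) (b.equivFun.symm w)).re with hG'
  have contOf : ∀ (L : V →ₗ[ℂ] V →ₛₗ[starRingEnd ℂ] ℂ),
      Continuous fun w : Fin n → ℂ => (L (b.equivFun.symm w) (b.equivFun.symm w)).re := by
    intro L
    have : (fun w : Fin n → ℂ => (L (b.equivFun.symm w) (b.equivFun.symm w)).re)
        = fun w => (∑ i, ∑ j, w i * (starRingEnd ℂ) (w j) * L (b i) (b j)).re := by
      funext w; rw [expand]
    rw [this]
    apply Complex.continuous_re.comp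
    apply continuous_finset_sum _ fun i _ => continuous_finset_sum _ fun j _ => ?_
    exact ((continuous_apply i).mul (continuous_star.comp (continuous_apply j))).mul
      continuous_const
  have contG : Continuous G := contOf H
  have contG' : Continuous G' := contOf H'
  -- facts about vectors on the sphere
  have hne0 : ∀ w : Fin n → ℂ, w ≠ 0 → b.equivFun.symm w ≠ 0 := by
    intro w hw
    simpa using (b.equivFun.symm.map_ne_zero_iff).mpr hw
  set S := Metric.sphere (0 : Fin n → ℂ) 1 with hSdef
  have hSne0 : ∀ w ∈ S, w ≠ 0 := by
    intro w hw
    have : ‖w‖ = 1 := by simpa using mem_sphere_zero_iff_norm.mp hw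
    intro h0; rw [h0] at this; simp at this
  set A := S ∩ G ⁻¹' Set.Iic 0 with hAdef
  have hAcomp : IsCompact A := (isCompact_sphere 0 1).inter_right (isClosed_Iic.preimage contG)
  have hG'posA : ∀ w ∈ A, 0 < G' w := by
    intro w hw
    exact hpos' _ (hne0 w (hSne0 w hw.1)) hw.2
  have key : ∃ c : ℝ, 0 < c ∧ ∀ w ∈ S, 0 < G w + c * G' w := by
    by_cases hAne : A.Nonempty
    · obtain ⟨w₀, hw₀A, hmin0⟩ := hAcomp.exists_isMinOn hAne contG'.continuousOn
      obtain ⟨w₁, hw₁A, hmin1⟩ := hAcomp.exists_isMinOn hAne contG.continuousOn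
      set δ := G' w₀ with hδdef
      have hδ : 0 < δ := hG'posA _ hw₀A
      set M := G w₁ with hMdef
      have hM : M ≤ 0 := hw₁A.2
      refine ⟨(1 - M) / δ, div_pos (by linarith) hδ, ?_⟩
      intro w hwS
      by_cases hwA : w ∈ A
      · have h1 : δ ≤ G' w := hmin0 hwA
        have h2 : M ≤ G w := hmin1 hwA
        have h3 : (1 - M) / δ * δ = 1 - M := div_mul_cancel₀ _ hδ.ne'
        have hc : 0 < (1 - M) / δ := div_pos (by linarith) hδ
        nlinarith
      · have hg : 0 < G w := by
          by_contra h
          exact hwA ⟨hwS, by simpa using not_lt.mp h⟩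
        have hg' : 0 ≤ G' w := hnn _
        have hc : 0 < (1 - M) / δ := div_pos (by linarith) hδ
        nlinarith
    · refine ⟨1, one_pos, ?_⟩
      intro w hwS
      have hg : 0 < G w := by
        by_contra h
        exact hAne ⟨w, hwS, by simpa using not_lt.mp h⟩
      have hg' : 0 ≤ G' w := hnn _
      linarith
  obtain ⟨c, hc, hcb⟩ := key
  refine ⟨c, hc, ?_⟩
  intro v hv
  set w := b.equivFun v with hwdef
  have hw : w ≠ 0 := by
    simpa [hwdef] using (b.equivFun.map_ne_zero_iff).mpr hv
  have ht : (0:ℝ) < ‖w‖ := norm_pos_iff.mpr hw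
  set r := ‖w‖⁻¹ with hrdef
  have hr : 0 < r := inv_pos.mpr ht
  set w' := ((r : ℂ)) • w with hw'def
  have hw'S : w' ∈ S := by
    rw [hSdef, mem_sphere_zero_iff_norm, hw'def, norm_smul, Complex.norm_real,
      Real.norm_eq_abs, abs_of_pos hr, hrdef]
    exact inv_mul_cancel₀ ht.ne'
  have hsymm : b.equivFun.symm w' = ((r : ℂ)) • v := by
    rw [hw'def, map_smul, hwdef, b.equivFun.symm_apply_apply]
  have hvals : ∀ (L : V →ₗ[ℂ] V →ₛₗ[starRingEnd ℂ] ℂ),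
      (L (b.equivFun.symm w') (b.equivFun.symm w')).re = r * (r * (L v v).re) := by
    intro L
    rw [hsymm]
    have e1 : L ((r:ℂ) • v) ((r:ℂ) • v) = (r:ℂ) * ((r:ℂ) * L v v) := by
      have h1 : L ((r:ℂ) • v) = (r:ℂ) • L v := map_smul L _ v
      have h2 : (L v) ((r:ℂ) • v) = (starRingEnd ℂ) ((r:ℂ)) • L v v :=
        LinearMap.map_smulₛₗ (L v) _ v
      rw [h1, LinearMap.smul_apply, h2, Complex.conj_ofReal, smul_eq_mul, smul_eq_mul]
    rw [e1, Complex.re_ofReal_mul, Complex.re_ofReal_mul]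
  have hkey := hcb w' hw'S
  have hGval : G w' = r * (r * (H v v).re) := hvals H
  have hG'val : G' w' = r * (r * (H' v v).re) := hvals H'
  rw [hGval, hG'val] at hkey
  have heq : r * (r * (H v v).re) + c * (r * (r * (H' v v).re))
      = (r * r) * ((H v v).re + c * (H' v v).re) := by ring
  rw [heq] at hkey
  have hgoal : 0 < (H v v).re + c * (H' v v).re := by
    by_contra h
    push_neg at h
    have : (r * r) * ((H v v).re + c * (H' v v).re) ≤ 0 :=
      mul_nonpos_of_nonneg_of_nonpos (mul_pos hr hr).le h
    linarith
  have : (H v v + (c : ℂ) * H' v v).re = (H v v).re + c * (H' v v).re := by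
    simp [Complex.add_re, Complex.re_ofReal_mul]
  rw [this]
  exact hgoal
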